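/- arXiv:2407.06921 — 2 statements merged into one kernel-verified Lean document; each statement's English description precedes it below -/
import Mathlib

section
/- Let F be a totally real number field, ℓ an odd prime unramified in F, f an odd positive integer, and β = √(ℓ)^f · ζ where ζ is a root of unity whose order is not divisible by ℓ and [F(β):F] = 2 with β totally imaginary and β̄ = √(ℓ)^f ζ^{-1} the conjugate of β over F. If ζ + ζ^{-1} ∈ F, then ζ + ζ^{-1} = 0, i.e., ζ = ±i and β = ±√(-ℓ)^f. -/
open NumberField



-- trace of y*x is divisible by ℓ when x^2 = ℓ
theorem aux_trace_dvd (F : Type) [Field F] [NumberField F]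
    (ℓ : ℕ) (hl : ℓ.Prime) (x : 𝓞 F) (hx : x ^ 2 = (ℓ : 𝓞 F)) (y : 𝓞 F) :
    ((Algebra.trace ℤ (𝓞 F) (y * x) : ℤ) : ZMod ℓ) = 0 := by
  haveI : Fact ℓ.Prime := ⟨hl⟩
  classical
  set b := NumberField.RingOfIntegers.basis F with hb
  have h1 : Algebra.trace ℤ (𝓞 F) (y * x) = Matrix.trace (Algebra.leftMulMatrix b (y * x)) :=
    Algebra.trace_eq_matrix_trace b (y * x)
  set A := Algebra.leftMulMatrix b (y * x) with hA
  set M := (Int.castRingHom (ZMod ℓ)).mapMatrix A with hM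
  have hsq : (y * x) ^ 2 = y ^ 2 * (ℓ : 𝓞 F) := by rw [mul_pow, hx]
  have hA2 : A ^ 2 = Algebra.leftMulMatrix b (y ^ 2) * (ℓ : Matrix _ _ ℤ) := by
    rw [hA, ← map_pow, hsq, map_mul, map_natCast]
  have hℓ0 : ((ℓ : ℕ) : Matrix (Module.Free.ChooseBasisIndex ℤ (𝓞 F))
      (Module.Free.ChooseBasisIndex ℤ (𝓞 F)) (ZMod ℓ)) = 0 := by
    rw [← Matrix.diagonal_natCast, ZMod.natCast_self]
    simp
  have hM2 : M ^ 2 = 0 := by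
    rw [hM, ← map_pow, hA2, map_mul, map_natCast, hℓ0, mul_zero]
  have hnil : IsNilpotent (Matrix.trace M) :=
    Matrix.isNilpotent_trace_of_isNilpotent ⟨2, hM2⟩
  have htr0 : Matrix.trace M = 0 := hnil.eq_zero
  have : Matrix.trace M = ((Matrix.trace A : ℤ) : ZMod ℓ) := by
    simp [hM, Matrix.trace, Matrix.diag]
  rw [h1, ← this, htr0]

theorem aux_dvd_discr (F : Type) [Field F] [NumberField F]
    (ℓ : ℕ) (hl : ℓ.Prime) (x : 𝓞 F) (hx : x ^ 2 = (ℓ : 𝓞 F)) :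
    (ℓ : ℤ) ∣ NumberField.discr F := by
  haveI : Fact ℓ.Prime := ⟨hl⟩
  classical
  set b := NumberField.RingOfIntegers.basis F with hb
  set v : Module.Free.ChooseBasisIndex ℤ (𝓞 F) → ZMod ℓ := fun i => ((b.repr x i : ℤ) : ZMod ℓ)
    with hv
  -- v ≠ 0
  have hv0 : v ≠ 0 := by
    intro h
    have hdvd : ∀ i, (ℓ : ℤ) ∣ b.repr x i := by
      intro i
      have := congrFun h i
      rwa [hv, Pi.zero_apply, ZMod.intCast_zmod_eq_zero_iff_dvd] at this
    -- then x = ℓ • y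
    set y : 𝓞 F := ∑ i, (b.repr x i / ℓ) • b i with hy
    have hxy : x = (ℓ : ℤ) • y := by
      rw [hy, Finset.smul_sum]
      conv_lhs => rw [← b.sum_repr x]
      refine Finset.sum_congr rfl fun i _ => ?_
      rw [smul_smul, Int.mul_ediv_cancel' (hdvd i)]
    have hchar : ((ℓ : ℤ) : 𝓞 F) ≠ 0 := by
      exact_mod_cast (Nat.cast_ne_zero (R := 𝓞 F)).mpr hl.ne_zero
    have hxx : x = ((ℓ : ℤ) : 𝓞 F) * y := by rw [hxy, zsmul_eq_mul]
    have hcast : ((ℓ : ℕ) : 𝓞 F) = ((ℓ : ℤ) : 𝓞 F) := by push_cast; rfl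
    have h1 : ((ℓ : ℤ) : 𝓞 F) * (((ℓ : ℤ) : 𝓞 F) * y ^ 2 - 1) = 0 := by
      have h2 := hx
      rw [hxx, hcast] at h2
      linear_combination h2
    have h2 : ((ℓ : ℤ) : 𝓞 F) * y ^ 2 = 1 := by
      rcases mul_eq_zero.mp h1 with h | h
      · exact absurd h hchar
      · linear_combination h
    -- take norms
    have hnorm := congrArg (Algebra.norm ℤ) h2
    rw [map_mul, map_one, map_pow] at hnorm
    have hnl : Algebra.norm ℤ (((ℓ : ℤ) : 𝓞 F)) = (ℓ : ℤ) ^ Fintype.card (Module.Free.ChooseBasisIndex ℤ (𝓞 F)) := by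
      have := Algebra.norm_algebraMap_of_basis b (ℓ : ℤ)
      simpa using this
    rw [hnl] at hnorm
    have hcard : 0 < Fintype.card (Module.Free.ChooseBasisIndex ℤ (𝓞 F)) := by
      rw [← Module.finrank_eq_card_basis b, NumberField.RingOfIntegers.rank]
      exact Module.finrank_pos
    have hdvd1 : (ℓ : ℤ) ∣ 1 :=
      dvd_trans (dvd_pow_self (ℓ : ℤ) hcard.ne')
        ⟨Algebra.norm ℤ y ^ 2, hnorm.symm⟩
    have hle := Int.le_of_dvd one_pos hdvd1
    have := hl.two_le
    omega
  -- the reduced trace matrix kills v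
  have hmul : ((Algebra.traceMatrix ℤ b).map (Int.cast : ℤ → ZMod ℓ)).mulVec v = 0 := by
    funext j
    have key : ∑ i, Algebra.traceMatrix ℤ b j i * b.repr x i
        = Algebra.trace ℤ (𝓞 F) (b j * x) := by
      have : ∀ i, Algebra.traceMatrix ℤ b j i * b.repr x i
          = Algebra.trace ℤ (𝓞 F) (b.repr x i • (b j * b i)) := by
        intro i
        rw [map_smul, Algebra.traceMatrix_apply, Algebra.traceForm_apply, smul_eq_mul, mul_comm]
      rw [Finset.sum_congr rfl fun i _ => this i, ← map_sum]
      congr 1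
      calc ∑ i, b.repr x i • (b j * b i) = b j * ∑ i, b.repr x i • b i := by
            rw [Finset.mul_sum]
            exact Finset.sum_congr rfl fun i _ => (mul_smul_comm _ _ _).symm
        _ = b j * x := by rw [b.sum_repr x]
    have : ((Algebra.traceMatrix ℤ b).map (Int.cast : ℤ → ZMod ℓ)).mulVec v j
        = ((∑ i, Algebra.traceMatrix ℤ b j i * b.repr x i : ℤ) : ZMod ℓ) := by
      rw [Matrix.mulVec, dotProduct]
      push_cast
      rfl
    rw [Pi.zero_apply, this, key, aux_trace_dvd F ℓ hl x hx (b j)]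
  have hdet : ((Algebra.traceMatrix ℤ b).map (Int.cast : ℤ → ZMod ℓ)).det = 0 :=
    Matrix.exists_mulVec_eq_zero_iff.mp ⟨v, hv0, hmul⟩
  have : ((NumberField.discr F : ℤ) : ZMod ℓ) = 0 := by
    rw [NumberField.discr, Algebra.discr_def]
    exact (RingHom.map_det (Int.castRingHom (ZMod ℓ)) _).trans hdet
  exact (ZMod.intCast_zmod_eq_zero_iff_dvd _ _).mp this


/-- Let `F` be a totally real number field, `ℓ` an odd prime unramified in `F`
(equivalently `ℓ ∤ disc F`), `f` odd, and `β = √ℓ^f · ζ` with `ζ` a root of unity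
of order prime to `ℓ`, `[F(β):F] = 2`, `β` imaginary, and `β̄ = √ℓ^f ζ⁻¹` with
`β + β̄ ∈ F`.  If `ζ + ζ⁻¹ ∈ F` then `ζ + ζ⁻¹ = 0`, i.e. `ζ = ±i` and
`β = ±(√(-ℓ))^f`. -/
theorem stmt_10 (F : Type) [Field F] [NumberField F] [Algebra F ℂ]
    (htr : ∀ ψ : F →+* ℂ, ∀ x : F, (ψ x).im = 0)
    (ℓ f : ℕ) (hl : ℓ.Prime) (hlodd : Odd ℓ)
    (hunram : ¬ ((ℓ : ℤ) ∣ NumberField.discr F)) (hf : Odd f)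
    (ζ β : ℂ) (hroot : ∃ n : ℕ, 0 < n ∧ ¬ ℓ ∣ n ∧ ζ ^ n = 1)
    (hβ : β = ((Real.sqrt ℓ : ℝ) : ℂ) ^ f * ζ)
    (hdeg : (minpoly F β).natDegree = 2) (him : β.im ≠ 0)
    (hconj : β + ((Real.sqrt ℓ : ℝ) : ℂ) ^ f * ζ⁻¹ ∈ Set.range (algebraMap F ℂ))
    (hζF : ζ + ζ⁻¹ ∈ Set.range (algebraMap F ℂ)) :
    ζ + ζ⁻¹ = 0 ∧ (ζ = Complex.I ∨ ζ = -Complex.I) ∧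
      (β = (Complex.I * ((Real.sqrt ℓ : ℝ) : ℂ)) ^ f ∨
        β = -(Complex.I * ((Real.sqrt ℓ : ℝ) : ℂ)) ^ f) := by
  obtain ⟨c, hc⟩ := hζF
  obtain ⟨n, hn0, -, hzn⟩ := hroot
  have hζne : ζ ≠ 0 := fun h =>
    one_ne_zero ((hzn.symm.trans (by rw [h, zero_pow hn0.ne'])) : (1 : ℂ) = 0)
  obtain ⟨k, hk⟩ := hf
  have hr2 : ((Real.sqrt ℓ : ℝ) : ℂ) ^ 2 = (ℓ : ℂ) := by
    rw [← Complex.ofReal_pow, Real.sq_sqrt (Nat.cast_nonneg ℓ)]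
    push_cast
    rfl
  have hrf : ((Real.sqrt ℓ : ℝ) : ℂ) ^ f = (ℓ : ℂ) ^ k * ((Real.sqrt ℓ : ℝ) : ℂ) := by
    rw [hk, pow_add, pow_mul, hr2, pow_one]
  have hinj : Function.Injective (algebraMap F ℂ) := (algebraMap F ℂ).injective
  have hc0 : c = 0 := by
    by_contra h
    obtain ⟨s, hs⟩ := hconj
    have hs' : algebraMap F ℂ s = ((Real.sqrt ℓ : ℝ) : ℂ) ^ f * (algebraMap F ℂ c) := by
      rw [hs, hβ, hc]
      ring
    have hacx : algebraMap F ℂ c ≠ 0 := fun hh => h (hinj (by rw [hh, map_zero]))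
    have hl0 : ((ℓ : ℂ)) ≠ 0 := Nat.cast_ne_zero.mpr hl.ne_zero
    set x' : F := s / (ℓ ^ k * c) with hx'
    have halg : algebraMap F ℂ x' = ((Real.sqrt ℓ : ℝ) : ℂ) := by
      rw [hx', map_div₀, map_mul, map_pow, map_natCast, hs', hrf]
      field_simp
    have hx2 : x' ^ 2 = (ℓ : F) := hinj (by rw [map_pow, halg, hr2, map_natCast])
    have hint : IsIntegral ℤ x' :=
      ⟨Polynomial.X ^ 2 - Polynomial.C (ℓ : ℤ),
        Polynomial.monic_X_pow_sub_C _ two_ne_zero, by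
          simp [Polynomial.eval₂_sub, hx2]⟩
    set x : 𝓞 F := ⟨x', hint⟩ with hxdef
    have hxsq : x ^ 2 = (ℓ : 𝓞 F) := by
      ext
      push_cast
      exact hx2
    exact hunram (aux_dvd_discr F ℓ hl x hxsq)
  have h0 : ζ + ζ⁻¹ = 0 := by rw [← hc, hc0, map_zero]
  have hz2 : ζ ^ 2 = -1 := by
    have h1 : ζ * (ζ + ζ⁻¹) = 0 := by rw [h0, mul_zero]
    rw [mul_add, mul_inv_cancel₀ hζne] at h1
    linear_combination h1
  have hcase : ζ = Complex.I ∨ ζ = -Complex.I := by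
    have hfac : (ζ - Complex.I) * (ζ + Complex.I) = 0 := by
      have hI := Complex.I_sq
      linear_combination hz2 - hI
    rcases mul_eq_zero.mp hfac with h | h
    · exact Or.inl (sub_eq_zero.mp h)
    · exact Or.inr (eq_neg_of_add_eq_zero_left h)
  have hIr : (Complex.I * ((Real.sqrt ℓ : ℝ) : ℂ)) ^ f
      = (-1 : ℂ) ^ k * (Complex.I * ((Real.sqrt ℓ : ℝ) : ℂ) ^ f) := by
    rw [mul_pow, hk, pow_add, pow_mul, Complex.I_sq, pow_one]
    ring
  refine ⟨h0, hcase, ?_⟩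
  rcases Nat.even_or_odd k with hke | hko
  · rw [hke.neg_one_pow, one_mul] at hIr
    rcases hcase with h | h
    · left; rw [hβ, h, hIr]; ring
    · right; rw [hβ, h, hIr]; ring
  · rw [hko.neg_one_pow] at hIr
    rcases hcase with h | h
    · right; rw [hβ, h, hIr]; ring
    · left; rw [hβ, h, hIr]; ring
end

section
/- Let F be a totally real number field, ℓ a prime with ℓ ∤ 2·disc(F/ℚ), f an odd positive integer, and β a totally imaginary algebraic number with [F(β):F] = 2 satisfying β·β̄ = ℓ^f where β̄ is the conjugate of β over F. Suppose (β^e + β̄^e)^2 = c·ℓ^{ef} for some positive integer e and some c ∈ {0, 1, 3, 4}. Then β/√(ℓ^f) is a root of unity ζ with ζ^{2n} = 1 for some n with [F(ζ^2):F] ≤ 2. -/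
open NumberField

/-- Let `F` be a totally real number field, `ℓ` a prime with `ℓ ∤ 2·disc F`,
`f` odd, `β` imaginary with `[F(β):F] = 2` satisfying a quadratic
`X^2 + bX + ℓ^f` over `F` with conjugate `β̄`, so `β·β̄ = ℓ^f`.  If
`(β^e + β̄^e)^2 = c·ℓ^{ef}` for some positive `e` and `c ∈ {0,1,3,4}`, then
`ζ := β/√(ℓ^f)` is a root of unity with `ζ^{2n} = 1` for some `n > 0`, and
`[F(ζ^2):F] ≤ 2`. -/
theorem stmt_11 (F : Type) [Field F] [NumberField F] [Algebra F ℂ]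
    (htr : ∀ ψ : F →+* ℂ, ∀ x : F, (ψ x).im = 0)
    (ℓ f e : ℕ) (hl : ℓ.Prime)
    (hdisc : ¬ ((ℓ : ℤ) ∣ 2 * NumberField.discr F)) (hf : Odd f) (he : 0 < e)
    (β βbar : ℂ) (b : F)
    (hroot : β ^ 2 + algebraMap F ℂ b * β + (ℓ : ℂ) ^ f = 0)
    (hroot' : βbar ^ 2 + algebraMap F ℂ b * βbar + (ℓ : ℂ) ^ f = 0)
    (hne : βbar ≠ β) (hprod : β * βbar = (ℓ : ℂ) ^ f)
    (him : β.im ≠ 0) (hnotF : β ∉ Set.range (algebraMap F ℂ))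
    (hdeg : (minpoly F β).natDegree = 2)
    (hc : ∃ c ∈ ({0, 1, 3, 4} : Set ℂ), (β ^ e + βbar ^ e) ^ 2 = c * (ℓ : ℂ) ^ (e * f)) :
    ∃ n : ℕ, 0 < n ∧ (β / ((Real.sqrt ((ℓ : ℝ) ^ f) : ℝ) : ℂ)) ^ (2 * n) = 1 ∧
      (minpoly F ((β / ((Real.sqrt ((ℓ : ℝ) ^ f) : ℝ) : ℂ)) ^ 2)).natDegree ≤ 2 := by
  have hlne : (ℓ : ℂ) ≠ 0 := Nat.cast_ne_zero.mpr hl.pos.ne'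
  set L : ℂ := (ℓ : ℂ) ^ f with hL
  have hLne : L ≠ 0 := pow_ne_zero _ hlne
  have hβne : β ≠ 0 := by
    intro h; rw [h, zero_mul] at hprod; exact hLne hprod.symm
  -- βbar = L / β
  have hbar : βbar = L / β := by
    rw [eq_div_iff hβne]; linear_combination hprod
  -- sum of roots
  have hsum : β + βbar = -(algebraMap F ℂ b) := by
    have hdiff : (β - βbar) * (β + βbar + algebraMap F ℂ b) = 0 := by
      linear_combination hroot - hroot'
    rcases mul_eq_zero.mp hdiff with h | h
    · exact absurd (sub_eq_zero.mp h).symm hne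
    · linear_combination h
  -- square root facts
  set s : ℝ := Real.sqrt ((ℓ : ℝ) ^ f) with hs
  have hs2 : ((s : ℝ) : ℂ) ^ 2 = L := by
    have h1 : s ^ 2 = (ℓ : ℝ) ^ f := Real.sq_sqrt (by positivity)
    calc ((s : ℝ) : ℂ) ^ 2 = ((s ^ 2 : ℝ) : ℂ) := by push_cast; ring
      _ = (((ℓ : ℝ) ^ f : ℝ) : ℂ) := by rw [h1]
      _ = L := by push_cast; ring
  have hsne : ((s : ℝ) : ℂ) ≠ 0 := by
    intro h
    rw [h] at hs2
    simp at hs2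
    exact hLne hs2.symm
  set ζ : ℂ := β / ((s : ℝ) : ℂ) with hζ
  have hz2 : ζ ^ 2 = β ^ 2 / L := by rw [hζ, div_pow, hs2]
  have hz2e : ζ ^ (2 * e) = β ^ (2 * e) / L ^ e := by
    rw [hζ, div_pow, pow_mul, pow_mul, hs2, ← pow_mul]
  -- main equation
  obtain ⟨c, hcmem, hceq⟩ := hc
  subst hbar
  have hE : (β ^ (2 * e) + L ^ e) ^ 2 = c * L ^ e * β ^ (2 * e) := by
    have h2 : (ℓ : ℂ) ^ (e * f) = L ^ e := by rw [hL, ← pow_mul, mul_comm]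
    rw [h2, div_pow] at hceq
    field_simp at hceq
    have h3 : β ^ (2 * e) = β ^ e * β ^ e := by rw [two_mul, pow_add]
    rw [h3]
    linear_combination hceq
  set x : ℂ := β ^ (2 * e) with hx
  set M : ℂ := L ^ e with hM
  have hMne : M ≠ 0 := pow_ne_zero _ hLne
  have hx6 : x ^ 6 = M ^ 6 := by
    simp only [Set.mem_insert_iff, Set.mem_singleton_iff] at hcmem
    rcases hcmem with rfl | rfl | rfl | rfl
    · have h0 : (x + M) ^ 2 = 0 := by linear_combination hE
      have hxm : x = -M := by linear_combination sq_eq_zero_iff.mp h0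
      rw [hxm]; ring
    · linear_combination ((x - M) * (x ^ 3 + M ^ 3)) * hE
    · linear_combination ((x + M) * (x ^ 3 - M ^ 3)) * hE
    · have h4 : (x - M) ^ 2 = 0 := by linear_combination hE
      have hxm : x = M := by linear_combination sq_eq_zero_iff.mp h4
      rw [hxm]
  refine ⟨6 * e, by positivity, ?_, ?_⟩
  · rw [show 2 * (6 * e) = (2 * e) * 6 by ring, pow_mul, hz2e, div_pow, hx6]
    exact div_self (pow_ne_zero _ hMne)
  -- minpoly part
  · set a : F := (b ^ 2 - 2 * (ℓ : F) ^ f) / (ℓ : F) ^ f with ha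
    set B : ℂ := algebraMap F ℂ b with hB
    have hA : algebraMap F ℂ a = (B ^ 2 - 2 * L) / L := by
      rw [ha, map_div₀]
      push_cast [map_sub, map_mul, map_pow, map_ofNat, map_natCast]
      rfl
    set p : Polynomial F := Polynomial.X ^ 2 - Polynomial.C a * Polynomial.X + Polynomial.C 1
      with hp
    have hmonic : p.Monic := by
      unfold p
      monicity!
    have hpdeg : p.natDegree = 2 := by
      unfold p
      compute_degree!
    have haeval : Polynomial.aeval (ζ ^ 2) p = 0 := by
      rw [hp]
      simp only [map_add, map_sub, map_mul, map_pow, map_one, Polynomial.aeval_X,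
        Polynomial.aeval_C, Polynomial.aeval_one, hA, hz2]
      field_simp
      linear_combination (β ^ 2 - B * β + L) * hroot
    have := minpoly.min F (ζ ^ 2) hmonic haeval
    calc (minpoly F (ζ ^ 2)).natDegree ≤ p.natDegree := Polynomial.natDegree_le_natDegree this
      _ = 2 := hpdeg
end
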